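/- Let F ⊆ ℝⁿ be non-empty and compact, and suppose E is a simple tangent to F with focal point z ∈ F. Suppose Π_t : ℝⁿ → ℝⁿ is continuously differentiable on an open neighbourhood of z and its Jacobian derivative J_{z'}Π_t has rank m ≥ 1 for all z' in that neighbourhood. Then π_V(E) is a tangent to Π_t(F), where V = ker(J_z Π_t)^⊥ ∈ G(n,m) and π_V is the orthogonal projection onto V. -/

import Mathlib

open Metric MeasureTheory Filter Set
open scoped ENNReal NNReal Pointwise Topology

noncomputable section

/-- Euclidean space `ℝⁿ`. -/
abbrev Euc (n : ℕ) := EuclideanSpace ℝ (Fin n)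

/-- The image of a set under the orthogonal projection onto a subspace `V`. -/
def projSet {n : ℕ} (V : Submodule ℝ (Euc n)) (A : Set (Euc n)) : Set (Euc n) :=
  (fun x => (V.orthogonalProjectionOnto x : Euc n)) '' A

/-- One-sided (non-symmetric) Hausdorff distance `ρ_H(A,B) = sup_{a ∈ A} inf_{b ∈ B} |a-b|`. -/
def rhoH {X : Type*} [PseudoEMetricSpace X] (A B : Set X) : ℝ≥0∞ :=
  ⨆ a ∈ A, EMetric.infEdist a B

/-- `E` is a tangent to `F`: `E` is a non-empty closed subset of the closed unit ball and
there are maps `S_k` and constants `a_k, b_k > 0` with `sup_k b_k/a_k < ∞` such that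
`a_k |x-y| ≤ |S_k x - S_k y| ≤ b_k |x-y|` on `S_k⁻¹(B(0,1))` and `ρ_H(E, S_k(F)) → 0`. -/
def IsTangent {d : ℕ} (E F : Set (Euc d)) : Prop :=
  IsClosed E ∧ E.Nonempty ∧ E ⊆ closedBall 0 1 ∧
  ∃ S : ℕ → Euc d → Euc d, ∃ a b : ℕ → ℝ, ∃ M : ℝ,
    (∀ k, 0 < a k) ∧ (∀ k, 0 < b k) ∧ (∀ k, b k / a k ≤ M) ∧
    (∀ k, ∀ x ∈ S k ⁻¹' closedBall 0 1, ∀ y ∈ S k ⁻¹' closedBall 0 1,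
      a k * dist x y ≤ dist (S k x) (S k y) ∧ dist (S k x) (S k y) ≤ b k * dist x y) ∧
    Tendsto (fun k => rhoH E (S k '' F)) atTop (nhds 0)

/-- `E` is a simple tangent to `F` with focal point `z`: the maps are homotheties
`S_k x = c_k • x + t_k` with `c_k > 0`, `c_k → ∞`, `ρ_H(E, S_k(F)) → 0`, and the blow-up
centres `S_k⁻¹(0) = -(c_k)⁻¹ • t_k` converge to `z`. -/
def IsSimpleTangentFocal {d : ℕ} (E F : Set (Euc d)) (z : Euc d) : Prop :=
  IsClosed E ∧ E.Nonempty ∧ E ⊆ closedBall 0 1 ∧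
  ∃ c : ℕ → ℝ, ∃ t : ℕ → Euc d,
    (∀ k, 0 < c k) ∧ Tendsto c atTop atTop ∧
    Tendsto (fun k => rhoH E ((fun x => c k • x + t k) '' F)) atTop (nhds 0) ∧
    Tendsto (fun k => (-(c k)⁻¹) • t k) atTop (nhds z)

theorem exists_myB {n : ℕ} (L : Euc n →L[ℝ] Euc n) :
    ∃ B : Euc n ≃ₗ[ℝ] Euc n, ∀ x,
      B (L x) = ((LinearMap.ker (L : Euc n →ₗ[ℝ] Euc n))ᗮ.orthogonalProjectionOnto x : Euc n) := by
  set V := (LinearMap.ker (L : Euc n →ₗ[ℝ] Euc n))ᗮ with hVdef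
  set R := LinearMap.range (L : Euc n →ₗ[ℝ] Euc n) with hRdef
  have hmem : ∀ v : V, (L v : Euc n) ∈ R := fun v => ⟨v, rfl⟩
  let f : V →ₗ[ℝ] R := LinearMap.codRestrict R ((L : Euc n →ₗ[ℝ] Euc n).comp V.subtype) hmem
  have heq : (Vᗮ : Submodule ℝ (Euc n)) = LinearMap.ker (L : Euc n →ₗ[ℝ] Euc n) := by
    rw [hVdef]; exact Submodule.orthogonal_orthogonal _
  have hproj : ∀ y : Euc n, L (V.orthogonalProjectionOnto y : Euc n) = L y := by
    intro y
    have hker : y - (V.orthogonalProjectionOnto y : Euc n) ∈ Vᗮ :=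
      Submodule.sub_starProjection_mem_orthogonal y
    rw [heq] at hker
    have h0 : L (y - (V.orthogonalProjectionOnto y : Euc n)) = 0 := hker
    rw [map_sub, sub_eq_zero] at h0
    exact h0.symm
  have hinj : Function.Injective f := by
    intro v w hvw
    have hval : L (v : Euc n) = L (w : Euc n) := congrArg Subtype.val hvw
    have hker : ((v : Euc n) - w) ∈ LinearMap.ker (L : Euc n →ₗ[ℝ] Euc n) := by
      simp [LinearMap.mem_ker, map_sub, hval]
    have hV : ((v : Euc n) - w) ∈ V := V.sub_mem v.2 w.2
    have h0 : ((v : Euc n) - w) = 0 :=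
      inner_self_eq_zero.mp ((Submodule.mem_orthogonal _ _).mp hV _ hker)
    exact Subtype.ext (sub_eq_zero.mp h0)
  have hsurj : Function.Surjective f := by
    rintro ⟨-, y, rfl⟩
    exact ⟨V.orthogonalProjectionOnto y, Subtype.ext (by exact hproj y)⟩
  let e1 : V ≃ₗ[ℝ] R := LinearEquiv.ofBijective f ⟨hinj, hsurj⟩
  have hfr : Module.finrank ℝ Rᗮ = Module.finrank ℝ (LinearMap.ker (L : Euc n →ₗ[ℝ] Euc n)) := by
    have h1 : Module.finrank ℝ R + Module.finrank ℝ Rᗮ = Module.finrank ℝ (Euc n) :=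
      Submodule.finrank_add_finrank_orthogonal (K := R)
    have h2 : Module.finrank ℝ R + Module.finrank ℝ (LinearMap.ker (L : Euc n →ₗ[ℝ] Euc n))
        = Module.finrank ℝ (Euc n) := LinearMap.finrank_range_add_finrank_ker (L : Euc n →ₗ[ℝ] Euc n)
    have h3 : LinearMap.ker (L : Euc n →ₗ[ℝ] Euc n) = LinearMap.ker (L : Euc n →ₗ[ℝ] Euc n) := rfl
    rw [h3] at h2
    omega
  let e2 : Rᗮ ≃ₗ[ℝ] (LinearMap.ker (L : Euc n →ₗ[ℝ] Euc n)) := LinearEquiv.ofFinrankEq _ _ hfr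
  have hcR : IsCompl R Rᗮ := R.isCompl_orthogonal_of_hasOrthogonalProjection
  have hcV : IsCompl V (LinearMap.ker (L : Euc n →ₗ[ℝ] Euc n)) :=
    (Submodule.isCompl_orthogonal_of_hasOrthogonalProjection (K := LinearMap.ker (L : Euc n →ₗ[ℝ] Euc n))).symm
  have hmem' : ∀ x : Euc n, L x ∈ R := fun x => ⟨x, rfl⟩
  let B : Euc n ≃ₗ[ℝ] Euc n := (Submodule.prodEquivOfIsCompl R Rᗮ hcR).symm.trans
    ((e1.symm.prodCongr e2).trans (Submodule.prodEquivOfIsCompl V (LinearMap.ker (L : Euc n →ₗ[ℝ] Euc n)) hcV))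
  refine ⟨B, fun x => ?_⟩
  have h1 : (Submodule.prodEquivOfIsCompl R Rᗮ hcR).symm (L x) = (⟨L x, hmem' x⟩, 0) := by
    rw [LinearEquiv.symm_apply_eq, Submodule.coe_prodEquivOfIsCompl']
    simp
  have h2 : e1.symm ⟨L x, hmem' x⟩ = V.orthogonalProjectionOnto x := by
    rw [LinearEquiv.symm_apply_eq]
    apply Subtype.ext
    exact (hproj x).symm
  have h3 : B (L x) = ((e1.symm.prodCongr e2).trans
      (Submodule.prodEquivOfIsCompl V (LinearMap.ker (L : Euc n →ₗ[ℝ] Euc n)) hcV)) (⟨L x, hmem' x⟩, 0) := by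
    rw [show B (L x) = ((e1.symm.prodCongr e2).trans
      (Submodule.prodEquivOfIsCompl V (LinearMap.ker (L : Euc n →ₗ[ℝ] Euc n)) hcV))
        ((Submodule.prodEquivOfIsCompl R Rᗮ hcR).symm (L x)) from rfl, h1]
  rw [h3]
  have h4 : e2 0 = 0 := map_zero e2
  rw [LinearEquiv.trans_apply, LinearEquiv.prodCongr_apply, h2, h4,
    Submodule.coe_prodEquivOfIsCompl']
  simp only [ZeroMemClass.coe_zero, add_zero]
  rfl

set_option maxHeartbeats 2000000 in
/-- **Proposition 4.4**: orthogonal projections of simple tangents are tangents of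
nonlinear projections. If `F ⊆ ℝⁿ` is non-empty and compact, `E` is a simple tangent to
`F` with focal point `z ∈ F`, and `Π` is `C¹` of constant rank `m ≥ 1` on an open
neighbourhood of `z`, then `π_V(E)` is a tangent to `Π(F)` for `V = ker(J_z Π)ᗮ`. -/
theorem projection_of_tangent_isTangent {n m : ℕ} (hm : 1 ≤ m)
    (F : Set (Euc n)) (hFne : F.Nonempty) (hFc : IsCompact F)
    (E : Set (Euc n)) (z : Euc n) (hzF : z ∈ F) (hE : IsSimpleTangentFocal E F z)
    (Pi : Euc n → Euc n) (U : Set (Euc n)) (hU : IsOpen U) (hzU : z ∈ U)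
    (hdiff : ContDiffOn ℝ 1 Pi U)
    (hrank : ∀ z' ∈ U, Module.finrank ℝ (LinearMap.range (fderiv ℝ Pi z' : Euc n →ₗ[ℝ] Euc n)) = m) :
    IsTangent (projSet (LinearMap.ker (fderiv ℝ Pi z : Euc n →ₗ[ℝ] Euc n))ᗮ E) (Pi '' F) := by
  obtain ⟨hEc, hEne, hEball, c, t, hc, hcinf, hrho, hwten⟩ := hE
  set L := fderiv ℝ Pi z with hLdef
  set V := (LinearMap.ker (L : Euc n →ₗ[ℝ] Euc n))ᗮ with hVdef
  obtain ⟨B, hB⟩ := exists_myB L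
  set B' := B.toContinuousLinearEquiv with hB'def
  set CB : Euc n →L[ℝ] Euc n := (B' : Euc n →L[ℝ] Euc n) with hCB
  set CBs : Euc n →L[ℝ] Euc n := (B'.symm : Euc n →L[ℝ] Euc n) with hCBs
  set Kb : ℝ := max ‖CB‖ 1 with hKbdef
  set Ka : ℝ := max ‖CBs‖ 1 with hKadef
  have hKb1 : (1:ℝ) ≤ Kb := le_max_right _ _
  have hKa1 : (1:ℝ) ≤ Ka := le_max_right _ _
  have hKb0 : (0:ℝ) < Kb := lt_of_lt_of_le one_pos hKb1
  have hKa0 : (0:ℝ) < Ka := lt_of_lt_of_le one_pos hKa1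
  have hlip : ∀ (f : Euc n →L[ℝ] Euc n) (u v : Euc n), dist (f u) (f v) ≤ ‖f‖ * dist u v := by
    intro f u v
    rw [dist_eq_norm, dist_eq_norm, ← map_sub]
    exact f.le_opNorm _
  set w : ℕ → Euc n := fun k => (-(c k)⁻¹) • t k with hwdef
  set S : ℕ → Euc n → Euc n := fun k y => (c k) • (B' (y - Pi (w k))) with hSdef
  set prj : Euc n → Euc n := fun x => (V.orthogonalProjectionOnto x : Euc n) with hprj
  have hprjcont : Continuous prj := continuous_subtype_val.comp (V.orthogonalProjectionOnto).continuous
  have hprjnorm : ∀ x : Euc n, ‖prj x‖ ≤ ‖x‖ := by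
    intro x
    have h1 : ‖(V.orthogonalProjectionOnto) x‖ ≤ ‖V.orthogonalProjectionOnto‖ * ‖x‖ :=
      (V.orthogonalProjectionOnto).le_opNorm x
    have h2 : ‖V.orthogonalProjectionOnto‖ ≤ 1 := Submodule.orthogonalProjectionOnto_norm_le _
    have h3 : ‖prj x‖ = ‖(V.orthogonalProjectionOnto) x‖ := rfl
    nlinarith [norm_nonneg x, norm_nonneg ((V.orthogonalProjectionOnto) x)]
  have hEcpt : IsCompact E := (isCompact_closedBall (0:Euc n) 1).of_isClosed_subset hEc hEball
  have hE'eq : projSet V E = prj '' E := rfl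
  have hE'cpt : IsCompact (projSet V E) := by rw [hE'eq]; exact hEcpt.image hprjcont
  refine ⟨hE'cpt.isClosed, hEne.image prj, ?_, S, fun k => c k / Ka, fun k => c k * Kb,
    Ka * Kb, fun k => div_pos (hc k) hKa0, fun k => mul_pos (hc k) hKb0, ?_, ?_, ?_⟩
  · rintro - ⟨e, he, rfl⟩
    rw [mem_closedBall_zero_iff]
    exact le_trans (hprjnorm e) (mem_closedBall_zero_iff.mp (hEball he))
  · intro k
    have hck := hc k
    have h : c k * Kb / (c k / Ka) = Ka * Kb := by
      field_simp
    rw [h]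
  · intro k x _ y _
    have hck := hc k
    have hkey : dist (S k x) (S k y) = c k * dist (B' (x - Pi (w k))) (B' (y - Pi (w k))) := by
      rw [hSdef]
      simp only []
      rw [dist_smul₀, Real.norm_eq_abs, abs_of_pos hck]
    have hxy : dist (x - Pi (w k)) (y - Pi (w k)) = dist x y := dist_sub_right x y _
    constructor
    · have h1 : dist x y ≤ ‖CBs‖ * dist (B' (x - Pi (w k))) (B' (y - Pi (w k))) := by
        have h0 := hlip CBs (B' (x - Pi (w k))) (B' (y - Pi (w k)))
        have he1 : CBs (B' (x - Pi (w k))) = x - Pi (w k) := B'.symm_apply_apply _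
        have he2 : CBs (B' (y - Pi (w k))) = y - Pi (w k) := B'.symm_apply_apply _
        rw [he1, he2, hxy] at h0
        exact h0
      have h2 : ‖CBs‖ ≤ Ka := le_max_left _ _
      rw [hkey, div_mul_eq_mul_div, div_le_iff₀ hKa0]
      have hd0 : (0:ℝ) ≤ dist (B' (x - Pi (w k))) (B' (y - Pi (w k))) := dist_nonneg
      nlinarith [mul_le_mul_of_nonneg_left h1 (le_of_lt hck),
        mul_le_mul_of_nonneg_left h2 (mul_nonneg (le_of_lt hck) hd0)]
    · have h1 : dist (B' (x - Pi (w k))) (B' (y - Pi (w k))) ≤ ‖CB‖ * dist x y := by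
        have h0 := hlip CB (x - Pi (w k)) (y - Pi (w k))
        rwa [hxy] at h0
      have h2 : ‖CB‖ ≤ Kb := le_max_left _ _
      beta_reduce
      rw [hkey]
      have hd1 : (0:ℝ) ≤ dist x y := dist_nonneg
      nlinarith [mul_le_mul_of_nonneg_left h1 (le_of_lt hck),
        mul_le_mul_of_nonneg_left h2 (mul_nonneg (le_of_lt hck) hd1)]
  · rw [ENNReal.tendsto_nhds_zero]
    intro εe hεe
    set εm : ℝ≥0∞ := min εe 1 with hεm
    have hεmne : εm ≠ ⊤ := ne_top_of_le_ne_top (by simp) (min_le_right _ _)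
    set ε : ℝ := εm.toReal with hεdef
    have hεpos : 0 < ε := by
      apply ENNReal.toReal_pos _ hεmne
      rw [hεm]
      intro hcon
      have h01 : εe = 0 ∨ (1:ℝ≥0∞) = 0 := by
        rcases le_total εe 1 with hle | hle
        · left; rw [min_eq_left hle] at hcon; exact hcon
        · right; rw [min_eq_right hle] at hcon; exact hcon
      rcases h01 with h | h
      · exact absurd h (ne_of_gt hεe)
      · exact one_ne_zero h
    have hofReal : ENNReal.ofReal ε ≤ εe := by
      rw [hεdef, ENNReal.ofReal_toReal hεmne]
      exact min_le_left _ _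
    refine Filter.Eventually.mono ?_ (fun k hk => le_trans hk hofReal)
    set ε' : ℝ := ε / (4 * Kb) with hε'def
    have hε'pos : 0 < ε' := by positivity
    set η : ℝ := min (ε/8) (1/2) with hηdef
    have hηpos : 0 < η := by positivity
    have hηhalf : η ≤ 1/2 := min_le_right _ _
    have hηε : η ≤ ε/8 := min_le_left _ _
    have hfd : ContinuousOn (fderiv ℝ Pi) U := hdiff.continuousOn_fderiv_of_isOpen hU le_rfl
    have hfdz : ContinuousAt (fderiv ℝ Pi) z := hfd.continuousAt (hU.mem_nhds hzU)
    obtain ⟨δ₀, hδ₀pos, hδ₀⟩ := Metric.continuousAt_iff.mp hfdz ε' hε'pos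
    obtain ⟨δ₁, hδ₁pos, hδ₁⟩ := Metric.isOpen_iff.mp hU z hzU
    set δ : ℝ := min δ₀ δ₁ / 2 with hδdef
    have hδpos : 0 < δ := by positivity
    have hδU : closedBall z δ ⊆ U := by
      intro y hy
      apply hδ₁
      rw [mem_ball]
      have hmin : min δ₀ δ₁ ≤ δ₁ := min_le_right _ _
      have hdy : dist y z ≤ δ := mem_closedBall.mp hy
      rw [hδdef] at hdy
      linarith
    have hδfd : ∀ y ∈ closedBall z δ, ‖fderiv ℝ Pi y - L‖ ≤ ε' := by
      intro y hy
      have hlt : dist y z < δ₀ := by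
        have h1 : dist y z ≤ δ := mem_closedBall.mp hy
        have hmin : min δ₀ δ₁ ≤ δ₀ := min_le_left _ _
        rw [hδdef] at h1
        linarith
      have h2 := hδ₀ hlt
      rw [dist_eq_norm] at h2
      exact le_of_lt h2
    have hPidiff : ∀ y ∈ closedBall z δ, DifferentiableAt ℝ Pi y := by
      intro y hy
      exact (hdiff.contDiffAt (hU.mem_nhds (hδU hy))).differentiableAt one_ne_zero
    have hg : ∀ x ∈ closedBall z δ, ∀ y ∈ closedBall z δ,
        ‖(Pi y - L y) - (Pi x - L x)‖ ≤ ε' * ‖y - x‖ := by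
      intro x hx y hy
      have hdg : ∀ u ∈ closedBall z δ, DifferentiableAt ℝ (fun v => Pi v - L v) u :=
        fun u hu => (hPidiff u hu).sub L.differentiableAt
      have hbd : ∀ u ∈ closedBall z δ, ‖fderiv ℝ (fun v => Pi v - L v) u‖ ≤ ε' := by
        intro u hu
        rw [fderiv_fun_sub (hPidiff u hu) L.differentiableAt, L.fderiv]
        exact hδfd u hu
      exact (convex_closedBall z δ).norm_image_sub_le_of_norm_fderiv_le hdg hbd hx hy
    have hev1 : ∀ᶠ k in atTop,
        rhoH E ((fun x => c k • x + t k) '' F) ≤ ENNReal.ofReal η :=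
      (ENNReal.tendsto_nhds_zero.mp hrho) _ (by simp [ENNReal.ofReal_pos, hηpos])
    have hev2 : ∀ᶠ k in atTop, w k ∈ closedBall z (δ/2) :=
      hwten.eventually_mem (Metric.closedBall_mem_nhds z (by positivity))
    have hev3 : ∀ᶠ k in atTop, 4/δ ≤ c k := hcinf.eventually_ge_atTop _
    filter_upwards [hev1, hev2, hev3] with k h1 h2 h3
    rw [rhoH]
    apply iSup₂_le
    rintro - ⟨e, he, rfl⟩
    have hck := hc k
    have hck4 : 4/δ ≤ c k := h3
    have hinfe : EMetric.infEdist e ((fun x => c k • x + t k) '' F) ≤ ENNReal.ofReal η := by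
      refine le_trans ?_ h1
      rw [rhoH]
      exact le_iSup₂ (f := fun a (_ : a ∈ E) =>
        EMetric.infEdist a ((fun x => c k • x + t k) '' F)) e he
    have hlt : EMetric.infEdist e ((fun x => c k • x + t k) '' F) < ENNReal.ofReal (2*η) :=
      lt_of_le_of_lt hinfe (by
        rw [ENNReal.ofReal_lt_ofReal_iff (by positivity)]
        linarith)
    obtain ⟨-, ⟨x, hxF, rfl⟩, hed⟩ := EMetric.infEdist_lt_iff.mp hlt
    have hdiste : dist e (c k • x + t k) < 2*η := edist_lt_ofReal.mp hed
    have hq : c k • x + t k = c k • (x - w k) := by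
      have hcw : c k • w k = -t k := by
        rw [hwdef]
        simp only []
        rw [smul_smul]
        have hc1 : c k * -(c k)⁻¹ = -1 := by field_simp
        rw [hc1, neg_one_smul]
      rw [smul_sub, hcw, sub_neg_eq_add]
    have hxw : ‖x - w k‖ ≤ 2 / c k := by
      have h5 : ‖e‖ ≤ 1 := mem_closedBall_zero_iff.mp (hEball he)
      have h4 : ‖c k • (x - w k)‖ ≤ 2 := by
        rw [← hq]
        have htri : ‖c k • x + t k‖ ≤ ‖e‖ + ‖e - (c k • x + t k)‖ := by
          have := norm_sub_le (e) (e - (c k • x + t k))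
          calc ‖c k • x + t k‖ = ‖e - (e - (c k • x + t k))‖ := by abel_nf
            _ ≤ ‖e‖ + ‖e - (c k • x + t k)‖ := norm_sub_le _ _
        rw [← dist_eq_norm] at htri
        linarith
      have h6 : ‖c k • (x - w k)‖ = c k * ‖x - w k‖ := by
        rw [norm_smul, Real.norm_eq_abs, abs_of_pos hck]
      rw [h6] at h4
      rw [div_eq_mul_inv]
      calc ‖x - w k‖ = (c k * ‖x - w k‖) * (c k)⁻¹ := by field_simp
        _ ≤ 2 * (c k)⁻¹ := by
            apply mul_le_mul_of_nonneg_right h4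
            positivity
    have hck2 : 2 / c k ≤ δ / 2 := by
      rw [div_le_div_iff₀ hck (by norm_num : (0:ℝ) < 2)]
      rw [div_le_iff₀ hδpos] at hck4
      linarith
    have hwball : w k ∈ closedBall z δ := by
      rw [mem_closedBall]
      have := mem_closedBall.mp h2
      linarith
    have hxball : x ∈ closedBall z δ := by
      rw [mem_closedBall, dist_eq_norm]
      have hw2 : ‖w k - z‖ ≤ δ/2 := by
        rw [← dist_eq_norm]
        exact mem_closedBall.mp h2
      calc ‖x - z‖ = ‖(x - w k) + (w k - z)‖ := by abel_nf
        _ ≤ ‖x - w k‖ + ‖w k - z‖ := norm_add_le _ _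
        _ ≤ 2 / c k + δ/2 := by linarith
        _ ≤ δ := by linarith
    set err : Euc n := Pi x - Pi (w k) - L (x - w k) with herrdef
    have herr : ‖err‖ ≤ ε' * (2 / c k) := by
      have hgx := hg (w k) hwball x hxball
      have heq2 : (Pi x - L x) - (Pi (w k) - L (w k)) = err := by
        rw [herrdef, map_sub]
        abel
      rw [heq2] at hgx
      calc ‖err‖ ≤ ε' * ‖x - w k‖ := hgx
        _ ≤ ε' * (2 / c k) := mul_le_mul_of_nonneg_left hxw (le_of_lt hε'pos)
    have hkey : S k (Pi x) = prj (c k • x + t k) + c k • B' err := by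
      rw [hSdef]
      simp only []
      have hdecomp : Pi x - Pi (w k) = L (x - w k) + err := by rw [herrdef]; abel
      rw [hdecomp, map_add, smul_add]
      congr 1
      have hBL : B' (L (x - w k)) = prj (x - w k) := by
        rw [hB'def, LinearEquiv.coe_toContinuousLinearEquiv']
        exact hB (x - w k)
      rw [hBL, hq, hprj]
      simp only []
      rw [_root_.map_smul (V.orthogonalProjectionOnto) (c k) (x - w k)]
      simp
    have hdist2 : dist (prj e) (S k (Pi x)) ≤ 2*η + ε/2 := by
      have ha : dist (prj e) (prj (c k • x + t k)) ≤ dist e (c k • x + t k) := by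
        rw [dist_eq_norm, dist_eq_norm]
        have hsub : prj e - prj (c k • x + t k) = prj (e - (c k • x + t k)) := by
          rw [hprj]
          simp [map_sub]
        rw [hsub]
        exact hprjnorm _
      have hb2 : ‖c k • B' err‖ ≤ ε/2 := by
        have hBerr : ‖B' err‖ ≤ ‖CB‖ * ‖err‖ := CB.le_opNorm err
        have h8 : ‖c k • B' err‖ = c k * ‖B' err‖ := by
          rw [norm_smul, Real.norm_eq_abs, abs_of_pos hck]
        have h9 : ‖CB‖ ≤ Kb := le_max_left _ _
        have h10 : c k * ‖B' err‖ ≤ c k * (Kb * (ε' * (2 / c k))) := by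
          apply mul_le_mul_of_nonneg_left _ (le_of_lt hck)
          calc ‖B' err‖ ≤ ‖CB‖ * ‖err‖ := hBerr
            _ ≤ Kb * (ε' * (2 / c k)) := by
                nlinarith [norm_nonneg err, norm_nonneg (B' err), (CB).opNorm_nonneg]
        have h11 : c k * (Kb * (ε' * (2 / c k))) = 2 * Kb * ε' := by field_simp
        have h12 : 2 * Kb * ε' = ε/2 := by rw [hε'def]; field_simp; ring
        rw [h8]
        linarith
      calc dist (prj e) (S k (Pi x))
          ≤ dist (prj e) (prj (c k • x + t k)) + dist (prj (c k • x + t k)) (S k (Pi x)) :=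
            dist_triangle _ _ _
        _ ≤ dist e (c k • x + t k) + ‖c k • B' err‖ := by
            apply add_le_add ha
            rw [hkey, dist_eq_norm]
            simp
        _ ≤ 2*η + ε/2 := by linarith
    have hfinal : dist (prj e) (S k (Pi x)) ≤ ε := by
      have hq4 : 2*η ≤ ε/4 := by linarith
      linarith
    have hmem : S k (Pi x) ∈ S k '' (Pi '' F) := ⟨Pi x, ⟨x, hxF, rfl⟩, rfl⟩
    calc EMetric.infEdist (prj e) (S k '' (Pi '' F)) ≤ edist (prj e) (S k (Pi x)) :=
          EMetric.infEdist_le_edist_of_mem hmem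
      _ = ENNReal.ofReal (dist (prj e) (S k (Pi x))) := edist_dist _ _
      _ ≤ ENNReal.ofReal ε := ENNReal.ofReal_le_ofReal hfinal


end
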